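/- Fix δ ∈ (0,1]. Let z₁,…,z_n be independent centered Bernoulli random variables (z_i = b_i − q_i with b_i ~ Bernoulli(q_i), q_i ∈ [0,1]) and z = (z_i)_{i∈[n]}. Then with probability at least 1 − δ, ‖(D†)ᵀ z‖_∞ ≤ √2 ρ log(2n²/δ). -/

import Mathlib

open MeasureTheory ProbabilityTheory Finset Matrix

noncomputable section
namespace OneBit

/-- `D` is the edge–vertex incidence matrix of the undirected graph `G`:
rows indexed by edges `e = (i,j)` with `i < j`, carrying `1` at `min(i,j)` and `-1` at `max(i,j)`. -/
def IsIncidenceMatrix {n m : ℕ} (G : SimpleGraph (Fin n)) (D : Matrix (Fin m) (Fin n) ℝ) : Prop :=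
  ∃ ends : Fin m → Fin n × Fin n,
    Function.Injective ends ∧
    (∀ e, (ends e).1 < (ends e).2 ∧ G.Adj (ends e).1 (ends e).2) ∧
    (∀ i j : Fin n, i < j → G.Adj i j → ∃ e, ends e = (i, j)) ∧
    (∀ e k, D e k = if k = (ends e).1 then 1 else if k = (ends e).2 then -1 else 0)

/-- `Dd` is the Moore–Penrose pseudoinverse of `D`. -/
def IsMoorePenrose {n m : ℕ} (D : Matrix (Fin m) (Fin n) ℝ) (Dd : Matrix (Fin n) (Fin m) ℝ) : Prop :=
  D * Dd * D = D ∧ Dd * D * Dd = Dd ∧ (D * Dd)ᵀ = D * Dd ∧ (Dd * D)ᵀ = Dd * D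

/-- Inverse scaling factor `ρ = max_j ‖s_j‖₂`, the columns `s_j` of `D†`. -/
def rho {n m : ℕ} (Dd : Matrix (Fin n) (Fin m) ℝ) : ℝ :=
  ⨆ j : Fin m, Real.sqrt (∑ i, (Dd i j) ^ 2)

/-- Euclidean norm on `ℝⁿ`. -/
def l2 {n : ℕ} (p : Fin n → ℝ) : ℝ := Real.sqrt (∑ i, (p i) ^ 2)

/-- `‖(Dp)_T‖₁`, the ℓ₁ norm of `Dp` restricted to the coordinates in `T`. -/
def tvOn {n m : ℕ} (D : Matrix (Fin m) (Fin n) ℝ) (T : Finset (Fin m)) (p : Fin n → ℝ) : ℝ :=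
  ∑ e ∈ T, |D.mulVec p e|

/-- Compatibility factor `κ_T = inf_{p ∈ [0,1]^n, (Dp)_T ≠ 0} √|T| ‖p‖₂ / ‖(Dp)_T‖₁`. -/
def compat {n m : ℕ} (D : Matrix (Fin m) (Fin n) ℝ) (T : Finset (Fin m)) : ℝ :=
  sInf {x : ℝ | ∃ p : Fin n → ℝ, (∀ i, p i ∈ Set.Icc (0:ℝ) 1) ∧ tvOn D T p ≠ 0 ∧
    x = Real.sqrt T.card * l2 p / tvOn D T p}

/-- `‖p‖₀`, the number of nonzero coordinates. -/
def supp0 {n : ℕ} (p : Fin n → ℝ) : ℕ := Nat.card {i // p i ≠ 0}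


lemma exp_le_add_exp_sq (x : ℝ) : Real.exp x ≤ x + Real.exp (x ^ 2) := by
  rcases le_or_gt 1 x with h | h
  · have hx : x ≤ x ^ 2 := by nlinarith
    have h2 := Real.exp_le_exp.mpr hx
    linarith
  · have h1 : Real.exp x ≤ 1 + x + x ^ 2 := by
      rcases le_or_gt (-1) x with h2 | h2
      · have hb := Real.exp_bound (x := x) (by rw [abs_le]; constructor <;> linarith)
          (n := 2) (by norm_num)
        have hsum : ∑ i ∈ Finset.range 2, x ^ i / (Nat.factorial i) = 1 + x := by
          simp [Finset.sum_range_succ]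
        rw [hsum] at hb
        have habs : |x| ^ 2 = x ^ 2 := sq_abs x
        have hb' : Real.exp x - (1 + x) ≤ x ^ 2 * ((3:ℝ) / 4) := by
          have := abs_le.mp hb
          have hc : (|x|:ℝ) ^ 2 * ((2+1 : ℕ) / ((Nat.factorial 2 : ℕ) * 2) : ℝ) = x ^ 2 * (3/4) := by
            rw [habs]; norm_num [Nat.factorial]
          nlinarith [this.2, sq_abs x, sq_nonneg x]
        nlinarith [sq_nonneg x]
      · have h3 : Real.exp x ≤ Real.exp (-1) := Real.exp_le_exp.mpr (by linarith)
        have h4 : (2:ℝ) ≤ Real.exp 1 := by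
          have := Real.add_one_le_exp (1:ℝ); linarith
        have h5 : Real.exp (-1) ≤ 1/2 := by
          rw [Real.exp_neg]
          rw [inv_le_comm₀ (Real.exp_pos 1) (by norm_num)]
          linarith
        nlinarith [sq_nonneg (x+1)]
    have h2 : x ^ 2 + 1 ≤ Real.exp (x ^ 2) := Real.add_one_le_exp _
    linarith

lemma integrable_of_bdd {Ω : Type*} [MeasurableSpace Ω] {μ : Measure Ω} [IsFiniteMeasure μ]
    {f : Ω → ℝ} (C : ℝ) (hf : Measurable f) (h : ∀ ω, |f ω| ≤ C) : Integrable f μ :=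
  ⟨hf.aestronglyMeasurable, HasFiniteIntegral.of_bounded (C := C) (ae_of_all _ h)⟩

lemma mgf_le_of_bdd {Ω : Type*} [MeasurableSpace Ω] {μ : Measure Ω} [IsProbabilityMeasure μ]
    {X : Ω → ℝ} {c : ℝ} (hX : Measurable X) (hb : ∀ ω, |X ω| ≤ c)
    (hmean : ∫ ω, X ω ∂μ = 0) (t : ℝ) :
    mgf X μ t ≤ Real.exp (t ^ 2 * c ^ 2) := by
  have hptw : ∀ ω, Real.exp (t * X ω) ≤ t * X ω + Real.exp (t ^ 2 * c ^ 2) := by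
    intro ω
    have h1 := exp_le_add_exp_sq (t * X ω)
    have h2 : (t * X ω) ^ 2 ≤ t ^ 2 * c ^ 2 := by
      have := hb ω
      have habs : (X ω) ^ 2 ≤ c ^ 2 := by nlinarith [abs_nonneg (X ω), sq_abs (X ω)]
      nlinarith [sq_nonneg t]
    have h3 : Real.exp ((t * X ω) ^ 2) ≤ Real.exp (t ^ 2 * c ^ 2) := Real.exp_le_exp.mpr h2
    linarith
  have hXint : Integrable X μ := integrable_of_bdd c hX hb
  have hLint : Integrable (fun ω => Real.exp (t * X ω)) μ := by
    refine integrable_of_bdd (Real.exp (|t| * c)) ((hX.const_mul t).exp) (fun ω => ?_)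
    rw [abs_of_pos (Real.exp_pos _)]
    refine Real.exp_le_exp.mpr ?_
    calc t * X ω ≤ |t * X ω| := le_abs_self _
    _ = |t| * |X ω| := abs_mul _ _
    _ ≤ |t| * c := by
        have := hb ω
        have h0 : (0:ℝ) ≤ |t| := abs_nonneg t
        nlinarith
  have hRint : Integrable (fun ω => t * X ω + Real.exp (t ^ 2 * c ^ 2)) μ :=
    (hXint.const_mul t).add (integrable_const _)
  calc mgf X μ t = ∫ ω, Real.exp (t * X ω) ∂μ := rfl
  _ ≤ ∫ ω, (t * X ω + Real.exp (t ^ 2 * c ^ 2)) ∂μ :=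
      integral_mono hLint hRint hptw
  _ = t * (∫ ω, X ω ∂μ) + Real.exp (t ^ 2 * c ^ 2) := by
      rw [integral_add (hXint.const_mul t) (integrable_const _), integral_const_mul,
        integral_const]
      simp
  _ = Real.exp (t ^ 2 * c ^ 2) := by rw [hmean]; ring

lemma integral_bernoulli {Ω : Type*} [MeasurableSpace Ω] {μ : Measure Ω} [IsProbabilityMeasure μ]
    {f : Ω → ℝ} {p : ℝ} (hf : Measurable f) (hv : ∀ ω, f ω = 0 ∨ f ω = 1)
    (hp : 0 ≤ p) (hμ : μ {ω | f ω = 1} = ENNReal.ofReal p) : ∫ ω, f ω ∂μ = p := by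
  have hs : MeasurableSet {ω | f ω = 1} := hf (measurableSet_singleton 1)
  have hrepr : f = Set.indicator {ω | f ω = 1} (fun _ => (1:ℝ)) := by
    funext ω
    rcases hv ω with h | h <;> simp [Set.indicator_apply, h]
  rw [hrepr, integral_indicator_const (1:ℝ) hs, measureReal_def, hμ, ENNReal.toReal_ofReal hp, smul_eq_mul,
    mul_one]

lemma integrable_exp_of_bdd {Ω : Type*} [MeasurableSpace Ω] {μ : Measure Ω} [IsFiniteMeasure μ]
    {X : Ω → ℝ} {c : ℝ} (hX : Measurable X) (hb : ∀ ω, |X ω| ≤ c) (t : ℝ) :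
    Integrable (fun ω => Real.exp (t * X ω)) μ := by
  refine integrable_of_bdd (Real.exp (|t| * c)) ((hX.const_mul t).exp) (fun ω => ?_)
  rw [abs_of_pos (Real.exp_pos _)]
  refine Real.exp_le_exp.mpr ?_
  calc t * X ω ≤ |t * X ω| := le_abs_self _
  _ = |t| * |X ω| := abs_mul _ _
  _ ≤ |t| * c := by
      have := hb ω
      have h0 : (0:ℝ) ≤ |t| := abs_nonneg t
      nlinarith

lemma tail_bound {Ω : Type*} [MeasurableSpace Ω] {μ : Measure Ω} [IsProbabilityMeasure μ]
    {n : ℕ} (a : Fin n → ℝ) (Z : Fin n → Ω → ℝ)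
    (hmeas : ∀ i, Measurable (Z i))
    (hindep : iIndepFun Z μ)
    (hbd : ∀ i ω, |Z i ω| ≤ |a i|)
    (hmean : ∀ i, ∫ ω, Z i ω ∂μ = 0)
    {ρ L : ℝ} (hρ : Real.sqrt (∑ i, (a i) ^ 2) ≤ ρ) (hρ0 : 0 ≤ ρ) (hL : 2 ≤ L) :
    μ {ω | Real.sqrt 2 * ρ * L < |∑ i, Z i ω|} ≤ ENNReal.ofReal (2 * Real.exp (-L)) := by
  set K : ℝ := ∑ i, (a i) ^ 2 with hKdef
  have hK0 : 0 ≤ K := Finset.sum_nonneg fun i _ => sq_nonneg _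
  have hKρ : K ≤ ρ ^ 2 := by
    have := pow_le_pow_left₀ (Real.sqrt_nonneg K) hρ 2
    rwa [Real.sq_sqrt hK0] at this
  set ε : ℝ := Real.sqrt 2 * ρ * L with hεdef
  have hs2 : (0:ℝ) ≤ Real.sqrt 2 := Real.sqrt_nonneg 2
  have hε0 : 0 ≤ ε := by
    apply mul_nonneg (mul_nonneg hs2 hρ0); linarith
  have hε2 : ε ^ 2 = 2 * ρ ^ 2 * L ^ 2 := by
    rw [hεdef]
    rw [mul_pow, mul_pow, Real.sq_sqrt (by norm_num : (0:ℝ) ≤ 2)]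
  rcases eq_or_lt_of_le hK0 with hK | hK
  · -- K = 0 : all coordinates vanish
    have hai : ∀ i, (a i) ^ 2 = 0 := by
      intro i
      have := Finset.sum_eq_zero_iff_of_nonneg (fun i (_ : i ∈ Finset.univ) => sq_nonneg (a i))
        |>.mp hK.symm
      exact this i (Finset.mem_univ i)
    have hZ0 : ∀ ω, (∑ i, Z i ω) = 0 := by
      intro ω
      refine Finset.sum_eq_zero fun i _ => ?_
      have h1 := hbd i ω
      have h2 : a i = 0 := by nlinarith [hai i]
      rw [h2, abs_zero] at h1
      exact abs_nonpos_iff.mp h1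
    have : {ω | ε < |∑ i, Z i ω|} = (∅ : Set Ω) := by
      ext ω; simp [hZ0 ω, not_lt.mpr hε0]
    rw [this]
    simp
  · -- K > 0
    set t : ℝ := ε / (2 * K) with htdef
    have ht0 : 0 ≤ t := div_nonneg hε0 (by linarith)
    have hint : ∀ s : ℝ, Integrable (fun ω => Real.exp (s * (∑ i, Z i) ω)) μ := by
      intro s
      exact hindep.integrable_exp_mul_sum hmeas
        (fun i _ => integrable_exp_of_bdd (hmeas i) (hbd i) s)
    have hmgf : ∀ s : ℝ, mgf (∑ i, Z i) μ s ≤ Real.exp (s ^ 2 * K) := by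
      intro s
      rw [hindep.mgf_sum hmeas Finset.univ]
      calc ∏ i, mgf (Z i) μ s ≤ ∏ i, Real.exp (s ^ 2 * (a i) ^ 2) := by
            refine Finset.prod_le_prod (fun i _ => mgf_nonneg) (fun i _ => ?_)
            have := mgf_le_of_bdd (hmeas i) (hbd i) (hmean i) s
            rwa [sq_abs] at this
      _ = Real.exp (∑ i, s ^ 2 * (a i) ^ 2) := (Real.exp_sum _ _).symm
      _ = Real.exp (s ^ 2 * K) := by rw [← Finset.mul_sum]
    have hexp : Real.exp (-t * ε) * Real.exp (t ^ 2 * K) ≤ Real.exp (-L) := by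
      rw [← Real.exp_add]
      refine Real.exp_le_exp.mpr ?_
      have h1 : -t * ε + t ^ 2 * K = -(ε ^ 2) / (4 * K) := by
        rw [htdef]; field_simp; ring
      rw [h1, neg_div, neg_le_neg_iff, le_div_iff₀ (by linarith)]
      nlinarith [mul_nonneg (mul_nonneg hK0 (by linarith : (0:ℝ) ≤ L)) (by linarith : (0:ℝ) ≤ L - 2),
        mul_nonneg (by linarith : (0:ℝ) ≤ ρ ^ 2 - K) (by nlinarith : (0:ℝ) ≤ L ^ 2)]
    have hup : μ {ω | ε ≤ (∑ i, Z i) ω} ≤ ENNReal.ofReal (Real.exp (-L)) := by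
      rw [ENNReal.le_ofReal_iff_toReal_le (measure_ne_top μ _) (Real.exp_pos _).le]
      calc (μ {ω | ε ≤ (∑ i, Z i) ω}).toReal ≤ Real.exp (-t * ε) * mgf (∑ i, Z i) μ t :=
            measure_ge_le_exp_mul_mgf ε ht0 (hint t)
      _ ≤ Real.exp (-t * ε) * Real.exp (t ^ 2 * K) := by
            exact mul_le_mul_of_nonneg_left (hmgf t) (Real.exp_pos _).le
      _ ≤ Real.exp (-L) := hexp
    have hdown : μ {ω | (∑ i, Z i) ω ≤ -ε} ≤ ENNReal.ofReal (Real.exp (-L)) := by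
      rw [ENNReal.le_ofReal_iff_toReal_le (measure_ne_top μ _) (Real.exp_pos _).le]
      calc (μ {ω | (∑ i, Z i) ω ≤ -ε}).toReal
          ≤ Real.exp (-(-t) * (-ε)) * mgf (∑ i, Z i) μ (-t) :=
            measure_le_le_exp_mul_mgf (-ε) (neg_nonpos.mpr ht0) (hint (-t))
      _ ≤ Real.exp (-t * ε) * Real.exp (t ^ 2 * K) := by
            have := hmgf (-t)
            rw [neg_pow, neg_pow] at this
            simp only [neg_neg, neg_mul, mul_neg] at *
            refine mul_le_mul_of_nonneg_left ?_ (Real.exp_pos _).le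
            simpa using this
      _ ≤ Real.exp (-L) := hexp
    have hsub : {ω | ε < |∑ i, Z i ω|} ⊆
        {ω | ε ≤ (∑ i, Z i) ω} ∪ {ω | (∑ i, Z i) ω ≤ -ε} := by
      intro ω hω
      simp only [Set.mem_setOf_eq] at hω
      have hsum : (∑ i, Z i) ω = ∑ i, Z i ω := by simp [Finset.sum_apply]
      rcases lt_abs.mp hω with h | h
      · left; simp only [Set.mem_setOf_eq, hsum]; linarith
      · right; simp only [Set.mem_setOf_eq, hsum]; linarith
    calc μ {ω | ε < |∑ i, Z i ω|} ≤ μ ({ω | ε ≤ (∑ i, Z i) ω} ∪ {ω | (∑ i, Z i) ω ≤ -ε}) :=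
          measure_mono hsub
    _ ≤ μ {ω | ε ≤ (∑ i, Z i) ω} + μ {ω | (∑ i, Z i) ω ≤ -ε} := measure_union_le _ _
    _ ≤ ENNReal.ofReal (Real.exp (-L)) + ENNReal.ofReal (Real.exp (-L)) := add_le_add hup hdown
    _ = ENNReal.ofReal (2 * Real.exp (-L)) := by
          rw [← ENNReal.ofReal_add (Real.exp_pos _).le (Real.exp_pos _).le]; ring_nf

/-- Lemma 2 (noise term): if `z_i = b_i - q_i` with `b_i ~ Bernoulli(q_i)` independent,
then with probability at least `1 - δ`, `‖(D†)ᵀ z‖_∞ ≤ √2 ρ log(2n²/δ)`. -/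
theorem noise_term_bound
    {n m : ℕ} (G : SimpleGraph (Fin n)) (D : Matrix (Fin m) (Fin n) ℝ)
    (Dd : Matrix (Fin n) (Fin m) ℝ)
    (hD : IsIncidenceMatrix G D) (hG : G.Connected) (hDd : IsMoorePenrose D Dd)
    {Ω : Type*} [MeasurableSpace Ω] (μ : Measure Ω) [IsProbabilityMeasure μ]
    (q : Fin n → ℝ) (hq : ∀ i, q i ∈ Set.Icc (0:ℝ) 1)
    (b : Ω → Fin n → ℝ)
    (hmeas : ∀ i, Measurable fun ω => b ω i)
    (hval : ∀ ω i, b ω i = 0 ∨ b ω i = 1)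
    (hber : ∀ i, μ {ω | b ω i = 1} = ENNReal.ofReal (q i))
    (hindep : iIndepFun (fun i ω => b ω i) μ)
    (δ : ℝ) (hδ : δ ∈ Set.Ioc (0:ℝ) 1) :
    ENNReal.ofReal (1 - δ) ≤
      μ {ω | ∀ j : Fin m, |∑ i, Dd i j * (b ω i - q i)| ≤
        Real.sqrt 2 * rho Dd * Real.log (2 * (n:ℝ) ^ 2 / δ)} := by
  classical
  obtain ⟨hδ0, hδ1⟩ := hδ
  rcases Nat.eq_zero_or_pos m with hm0 | hm
  · have hempty : {ω : Ω | ∀ j : Fin m, |∑ i, Dd i j * (b ω i - q i)| ≤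
        Real.sqrt 2 * rho Dd * Real.log (2 * (n:ℝ) ^ 2 / δ)} = Set.univ := by
      ext ω
      simp only [Set.mem_setOf_eq, Set.mem_univ, iff_true]
      intro j
      exact absurd (j.2) (by omega)
    rw [hempty, measure_univ]
    exact ENNReal.ofReal_le_one.mpr (by linarith)
  obtain ⟨ends, hinj, hends, -, -⟩ := hD
  -- n ≥ 2
  have hn2 : 2 ≤ n := by
    have hj : Fin m := ⟨0, hm⟩
    have h1 := (hends hj).1
    have h2 := (ends hj).2.2
    have h3 := (ends hj).1.2
    omega
  -- m ≤ n * n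
  have hmn : (m : ℝ) ≤ (n : ℝ) ^ 2 := by
    have := Fintype.card_le_of_injective ends hinj
    simp only [Fintype.card_fin, Fintype.card_prod] at this
    have h2 : m ≤ n ^ 2 := by rw [pow_two]; exact this
    calc (m:ℝ) ≤ ((n^2 : ℕ) : ℝ) := by exact_mod_cast h2
    _ = (n:ℝ) ^ 2 := by push_cast; ring
  set L : ℝ := Real.log (2 * (n:ℝ) ^ 2 / δ) with hLdef
  have hnpos : (0:ℝ) < (n:ℝ) ^ 2 := by positivity
  have hxpos : (0:ℝ) < 2 * (n:ℝ) ^ 2 / δ := by positivity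
  have hx8 : (8:ℝ) ≤ 2 * (n:ℝ) ^ 2 / δ := by
    have hn4 : (4:ℝ) ≤ (n:ℝ) ^ 2 := by
      have : (2:ℝ) ≤ (n:ℝ) := by exact_mod_cast hn2
      nlinarith
    rw [le_div_iff₀ hδ0]
    nlinarith
  have hL : 2 ≤ L := by
    rw [hLdef, Real.le_log_iff_exp_le hxpos]
    have he : Real.exp 1 < 2.7182818286 := Real.exp_one_lt_d9
    have h2 : Real.exp 2 = Real.exp 1 * Real.exp 1 := by
      rw [← Real.exp_add]; norm_num
    nlinarith [Real.exp_pos 1]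
  have hρ : ∀ j : Fin m, Real.sqrt (∑ i, (Dd i j) ^ 2) ≤ rho Dd := by
    intro j
    exact le_ciSup (f := fun j : Fin m => Real.sqrt (∑ i, (Dd i j) ^ 2))
      (Set.Finite.bddAbove (Set.finite_range _)) j
  have hρ0 : 0 ≤ rho Dd := (Real.sqrt_nonneg _).trans (hρ ⟨0, hm⟩)
  set ε : ℝ := Real.sqrt 2 * rho Dd * L with hεdef
  -- per-coordinate variables
  set Z : Fin m → Fin n → Ω → ℝ := fun j i ω => Dd i j * (b ω i - q i) with hZdef
  have hZmeas : ∀ j i, Measurable (Z j i) := fun j i =>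
    ((hmeas i).sub measurable_const).const_mul _
  have hZindep : ∀ j, iIndepFun (Z j) μ := by
    intro j
    exact hindep.comp (fun i x => Dd i j * (x - q i))
      (fun i => (measurable_id.sub measurable_const).const_mul _)
  have hZbd : ∀ j i ω, |Z j i ω| ≤ |Dd i j| := by
    intro j i ω
    rw [hZdef]
    simp only [abs_mul]
    have h1 : |b ω i - q i| ≤ 1 := by
      obtain ⟨hq0, hq1⟩ := hq i
      rcases hval ω i with h | h <;> rw [h, abs_le] <;> constructor <;> linarith
    nlinarith [abs_nonneg (Dd i j)]
  have hZmean : ∀ j i, ∫ ω, Z j i ω ∂μ = 0 := by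
    intro j i
    rw [hZdef]
    simp only
    rw [integral_const_mul]
    have hbint : Integrable (fun ω => b ω i) μ := by
      refine ⟨(hmeas i).aestronglyMeasurable, ?_⟩
      refine HasFiniteIntegral.of_bounded (C := 1) (ae_of_all _ fun ω => ?_)
      rcases hval ω i with h | h <;> simp [h]
    have hEb : ∫ ω, b ω i ∂μ = q i :=
      integral_bernoulli (hmeas i) (fun ω => hval ω i) (hq i).1 (hber i)
    rw [integral_sub hbint (integrable_const _), hEb, integral_const]
    simp
  -- bad events
  set Bad : Fin m → Set Ω := fun j => {ω | ε < |∑ i, Z j i ω|} with hBdef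
  have hBadle : ∀ j, μ (Bad j) ≤ ENNReal.ofReal (2 * Real.exp (-L)) := by
    intro j
    exact tail_bound (fun i => Dd i j) (Z j) (hZmeas j) (hZindep j) (hZbd j) (hZmean j)
      (hρ j) hρ0 hL
  have hSmeas : ∀ j, Measurable fun ω => ∑ i, Z j i ω :=
    fun j => Finset.measurable_sum Finset.univ (fun i _ => hZmeas j i)
  have hBadmeas : ∀ j, MeasurableSet (Bad j) := by
    intro j
    exact measurableSet_lt measurable_const (hSmeas j).abs
  have hGood : {ω : Ω | ∀ j : Fin m, |∑ i, Dd i j * (b ω i - q i)| ≤ ε} = (⋃ j, Bad j)ᶜ := by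
    ext ω
    simp only [Set.mem_setOf_eq, Set.compl_iUnion, Set.mem_iInter, Set.mem_compl_iff, hBdef,
      Set.mem_setOf_eq, not_lt, hZdef]
  have hUnion : μ (⋃ j, Bad j) ≤ ENNReal.ofReal δ := by
    calc μ (⋃ j, Bad j) ≤ ∑' j : Fin m, μ (Bad j) := measure_iUnion_le _
    _ ≤ ∑' (_j : Fin m), ENNReal.ofReal (2 * Real.exp (-L)) := ENNReal.tsum_le_tsum hBadle
    _ = (m : ENNReal) * ENNReal.ofReal (2 * Real.exp (-L)) := by
        rw [tsum_fintype]
        simp [Finset.sum_const, Fintype.card_fin, nsmul_eq_mul]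
    _ = ENNReal.ofReal ((m : ℝ) * (2 * Real.exp (-L))) := by
        rw [ENNReal.ofReal_mul (by positivity : (0:ℝ) ≤ (m:ℝ))]
        congr 1
        exact (ENNReal.ofReal_natCast m).symm
    _ ≤ ENNReal.ofReal δ := by
        refine ENNReal.ofReal_le_ofReal ?_
        have hexpL : Real.exp (-L) = δ / (2 * (n:ℝ) ^ 2) := by
          rw [hLdef, Real.exp_neg, Real.exp_log hxpos]
          field_simp
        rw [hexpL]
        have h1 : (m:ℝ) * (2 * (δ / (2 * (n:ℝ) ^ 2))) = (m:ℝ) * δ / (n:ℝ) ^ 2 := by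
          field_simp
        rw [h1, div_le_iff₀ hnpos]
        nlinarith [hδ0.le, hmn]
  calc ENNReal.ofReal (1 - δ) = 1 - ENNReal.ofReal δ := by
        rw [← ENNReal.ofReal_one, ← ENNReal.ofReal_sub _ hδ0.le]
  _ ≤ 1 - μ (⋃ j, Bad j) := tsub_le_tsub_left hUnion 1
  _ = μ ((⋃ j, Bad j)ᶜ) := (prob_compl_eq_one_sub (MeasurableSet.iUnion hBadmeas)).symm
  _ = _ := by rw [← hGood]

end OneBit
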